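/- Let d ≥ 2 and for integers k ≥ d+1 define p_k := (d/(2d+1)) · (Γ(k − d + 2/(d−1)) / Γ(1 + 2/(d−1))) · (Γ(2 + (d+2)/(d−1)) / Γ(k + 1 − d + (d+2)/(d−1))), where Γ is the Gamma function. Then p_k ≥ 0 for all k ≥ d+1 and Σ_{k=d+1}^∞ p_k = 1; that is, (p_k)_{k≥d+1} is a probability distribution. -/

import Mathlib

open Real

/-- The limiting degree distribution of a `d`-dimensional random Apollonian network:
`p_k = (d/(2d+1)) · (Γ(k − d + 2/(d−1)) / Γ(1 + 2/(d−1)))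
     · (Γ(2 + (d+2)/(d−1)) / Γ(k + 1 − d + (d+2)/(d−1)))`. -/
noncomputable def apollonianDegreeDist (d k : ℕ) : ℝ :=
  ((d : ℝ) / (2 * (d : ℝ) + 1)) *
    (Real.Gamma ((k : ℝ) - (d : ℝ) + 2 / ((d : ℝ) - 1)) /
      Real.Gamma (1 + 2 / ((d : ℝ) - 1))) *
    (Real.Gamma (2 + ((d : ℝ) + 2) / ((d : ℝ) - 1)) /
      Real.Gamma ((k : ℝ) + 1 - (d : ℝ) + ((d : ℝ) + 2) / ((d : ℝ) - 1)))

/-- for `d ≥ 2`, the numbers `p_k`, `k ≥ d+1`, are nonnegative and sum to `1`,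
i.e. `(p_k)_{k ≥ d+1}` is a probability distribution. -/
theorem apollonianDegreeDist_isProbability (d : ℕ) (hd : 2 ≤ d) :
    (∀ k : ℕ, d + 1 ≤ k → 0 ≤ apollonianDegreeDist d k) ∧
    HasSum (fun j : ℕ => apollonianDegreeDist d (d + 1 + j)) 1 := by
  have hd2 : (2 : ℝ) ≤ (d : ℝ) := by exact_mod_cast hd
  have hdm : (0 : ℝ) < (d : ℝ) - 1 := by linarith
  set a : ℝ := 2 / ((d : ℝ) - 1) with ha_def
  set b : ℝ := ((d : ℝ) + 2) / ((d : ℝ) - 1) with hb_def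
  have ha : 0 < a := div_pos two_pos hdm
  have hb : 0 < b := div_pos (by linarith) hdm
  have hba : b - a = (d : ℝ) / ((d : ℝ) - 1) := by
    rw [ha_def, hb_def, div_sub_div_same]; ring_nf
  have hba1 : a + 1 < b := by
    have : (1 : ℝ) < (d : ℝ) / ((d : ℝ) - 1) := by
      rw [lt_div_iff₀ hdm]; linarith
    linarith [hba]
  -- nonnegativity
  have hnn : ∀ k : ℕ, d + 1 ≤ k → 0 ≤ apollonianDegreeDist d k := by
    intro k hk
    have hk' : (d : ℝ) + 1 ≤ (k : ℝ) := by exact_mod_cast hk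
    unfold apollonianDegreeDist
    have h1 : 0 < Real.Gamma ((k : ℝ) - (d : ℝ) + 2 / ((d : ℝ) - 1)) :=
      Real.Gamma_pos_of_pos (by rw [← ha_def] at *; linarith)
    have h2 : 0 < Real.Gamma (1 + 2 / ((d : ℝ) - 1)) :=
      Real.Gamma_pos_of_pos (by rw [← ha_def]; linarith)
    have h3 : 0 < Real.Gamma (2 + ((d : ℝ) + 2) / ((d : ℝ) - 1)) :=
      Real.Gamma_pos_of_pos (by rw [← hb_def]; linarith)
    have h4 : 0 < Real.Gamma ((k : ℝ) + 1 - (d : ℝ) + ((d : ℝ) + 2) / ((d : ℝ) - 1)) :=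
      Real.Gamma_pos_of_pos (by rw [← hb_def]; linarith)
    have hC : (0 : ℝ) ≤ (d : ℝ) / (2 * (d : ℝ) + 1) := by positivity
    positivity
  refine ⟨hnn, ?_⟩
  -- the telescoping sequence
  set f : ℕ → ℝ := fun j => Real.Gamma ((j : ℝ) + 1 + a) / Real.Gamma ((j : ℝ) + 1 + b)
    with hf_def
  have hGa : ∀ j : ℕ, 0 < Real.Gamma ((j : ℝ) + 1 + a) := fun j =>
    Real.Gamma_pos_of_pos (by positivity)
  have hGb : ∀ j : ℕ, 0 < Real.Gamma ((j : ℝ) + 1 + b) := fun j =>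
    Real.Gamma_pos_of_pos (by positivity)
  -- recurrences
  have hrecA : ∀ j : ℕ, Real.Gamma ((j : ℝ) + 2 + a) = ((j : ℝ) + 1 + a) *
      Real.Gamma ((j : ℝ) + 1 + a) := by
    intro j
    have := Real.Gamma_add_one (s := (j : ℝ) + 1 + a) (by positivity)
    rw [← this]; ring_nf
  have hrecB : ∀ j : ℕ, Real.Gamma ((j : ℝ) + 2 + b) = ((j : ℝ) + 1 + b) *
      Real.Gamma ((j : ℝ) + 1 + b) := by
    intro j
    have := Real.Gamma_add_one (s := (j : ℝ) + 1 + b) (by positivity)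
    rw [← this]; ring_nf
  -- telescoping step identity
  have hstep : ∀ j : ℕ, f j - f (j + 1) =
      (b - a) * (Real.Gamma ((j : ℝ) + 1 + a) / Real.Gamma ((j : ℝ) + 2 + b)) := by
    intro j
    have e1 : ((j + 1 : ℕ) : ℝ) + 1 + a = (j : ℝ) + 2 + a := by push_cast; ring
    have e2 : ((j + 1 : ℕ) : ℝ) + 1 + b = (j : ℝ) + 2 + b := by push_cast; ring
    simp only [hf_def, e1, e2, hrecA j, hrecB j]
    have hb1 := (hGb j).ne'
    have hb2 : ((j : ℝ) + 1 + b) ≠ 0 := by positivity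
    field_simp
    ring
  -- f tends to 0
  have hftendsto : Filter.Tendsto f Filter.atTop (nhds 0) := by
    have hub : ∀ j : ℕ, f j ≤ 1 / ((j : ℝ) + 1 + a) := by
      intro j
      have hmono : Real.Gamma ((j : ℝ) + 2 + a) ≤ Real.Gamma ((j : ℝ) + 1 + b) := by
        apply Real.Gamma_strictMonoOn_Ici.monotoneOn
        · exact Set.mem_Ici.mpr (by linarith)
        · exact Set.mem_Ici.mpr (by linarith)
        · linarith
      have h2 : f j ≤ Real.Gamma ((j : ℝ) + 1 + a) / Real.Gamma ((j : ℝ) + 2 + a) := by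
        rw [hf_def]
        apply div_le_div_of_nonneg_left (hGa j).le _ hmono
        rw [hrecA j]; positivity
      have h3 : Real.Gamma ((j : ℝ) + 1 + a) / Real.Gamma ((j : ℝ) + 2 + a) =
          1 / ((j : ℝ) + 1 + a) := by
        rw [hrecA j]
        rw [div_mul_eq_div_div_swap, div_self (hGa j).ne']
      linarith [h2, h3.le, h3.ge]
    have hlb : ∀ j : ℕ, 0 ≤ f j := fun j => div_nonneg (hGa j).le (hGb j).le
    have htop : Filter.Tendsto (fun j : ℕ => (j : ℝ) + 1 + a) Filter.atTop Filter.atTop := by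
      apply Filter.tendsto_atTop_add_const_right
      apply Filter.tendsto_atTop_add_const_right
      exact tendsto_natCast_atTop_atTop
    have h0 : Filter.Tendsto (fun j : ℕ => 1 / ((j : ℝ) + 1 + a)) Filter.atTop (nhds 0) := by
      simpa [one_div, Pi.inv_def] using htop.inv_tendsto_atTop
    exact squeeze_zero hlb hub h0
  -- telescoping sum
  have htel : HasSum (fun j : ℕ => f j - f (j + 1)) (f 0) := by
    have hnonneg : ∀ j : ℕ, 0 ≤ f j - f (j + 1) := by
      intro j
      rw [hstep j]
      have := Real.Gamma_pos_of_pos (show (0:ℝ) < (j : ℝ) + 2 + b by positivity)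
      have := hGa j
      have : (0:ℝ) ≤ b - a := by linarith
      positivity
    rw [hasSum_iff_tendsto_nat_of_nonneg hnonneg]
    have hsum : ∀ n : ℕ, ∑ i ∈ Finset.range n, (f i - f (i + 1)) = f 0 - f n := by
      intro n; exact Finset.sum_range_sub' f n
    simp only [hsum]
    simpa using (tendsto_const_nhds.sub hftendsto)
  -- identify the terms
  set K : ℝ := ((d : ℝ) / (2 * (d : ℝ) + 1)) * Real.Gamma (2 + b) /
      (Real.Gamma (1 + a) * (b - a)) with hK_def
  have hterm : ∀ j : ℕ, apollonianDegreeDist d (d + 1 + j) = K * (f j - f (j + 1)) := by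
    intro j
    rw [hstep j]
    unfold apollonianDegreeDist
    have hc1 : ((d + 1 + j : ℕ) : ℝ) - (d : ℝ) + 2 / ((d : ℝ) - 1) = (j : ℝ) + 1 + a := by
      push_cast; rw [← ha_def]; ring
    have hc2 : ((d + 1 + j : ℕ) : ℝ) + 1 - (d : ℝ) + ((d : ℝ) + 2) / ((d : ℝ) - 1)
        = (j : ℝ) + 2 + b := by
      push_cast; rw [← hb_def]; ring
    rw [hc1, hc2, hK_def, ← ha_def, ← hb_def]
    have h2 := (Real.Gamma_pos_of_pos (show (0:ℝ) < 1 + a by linarith)).ne'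
    have h4 := (Real.Gamma_pos_of_pos (show (0:ℝ) < (j : ℝ) + 2 + b by positivity)).ne'
    have hba0 : b - a ≠ 0 := by linarith [hba1]
    field_simp
  -- K * f 0 = 1
  have hK1 : K * f 0 = 1 := by
    have hG2b : Real.Gamma (2 + b) = (1 + b) * Real.Gamma (1 + b) := by
      have := Real.Gamma_add_one (s := 1 + b) (by positivity)
      rw [← this]; ring_nf
    have hf0 : f 0 = Real.Gamma (1 + a) / Real.Gamma (1 + b) := by
      simp [hf_def]
    have hGa1 := (Real.Gamma_pos_of_pos (show (0:ℝ) < 1 + a by linarith)).ne'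
    have hGb1 := (Real.Gamma_pos_of_pos (show (0:ℝ) < 1 + b by linarith)).ne'
    have hba0 : b - a ≠ 0 := by linarith [hba1]
    rw [hK_def, hf0, hG2b]
    have h1b : 1 + b = (2 * (d : ℝ) + 1) / ((d : ℝ) - 1) := by
      rw [hb_def]; field_simp; ring
    rw [h1b, hba]
    have hd0 : (d : ℝ) ≠ 0 := by linarith
    have h2d : 2 * (d : ℝ) + 1 ≠ 0 := by linarith
    field_simp
  have := htel.mul_left K
  rw [hK1] at this
  convert this using 2 with j
  · rfl
  · exact hterm j
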